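/- Let M : Matrix (Fin (n+1)) (Fin (n+1)) ℝ be diagonal with strictly positive diagonal entries, and let L_b : Matrix (Fin (n+1)) (Fin (n+1)) ℝ satisfy L_b.mulVec 𝟙 = 0 and Matrix.vecMul 𝟙 L_b = 0. With U the matrix whose first column is σ⁻¹ • 𝟙 and whose remaining columns are those of M⁻¹ * S, and V its inverse (first row 𝟙ᵀ M, remaining rows S⁺ * M), the similarity transformation block-diagonalizes the network matrix: V * (M⁻¹ * L_b) * U equals the block-diagonal matrix with (1,1) block the 1×1 zero matrix and (2,2) block S⁺ * L_b * M⁻¹ * S (and zero off-diagonal blocks). -/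

import Mathlib

open Matrix

/-- For a balanced Laplacian `L_b` (zero row and column sums) and a positive
diagonal matrix `M`, the similarity transformation by `U = [σ⁻¹𝟙, M⁻¹S]` and its inverse
`V = [𝟙ᵀM; S⁺M]` block-diagonalizes `M⁻¹ L_b`:
`V (M⁻¹ L_b) U = blockDiag(0, S⁺ L_b M⁻¹ S)`. -/
theorem similarity_block_diagonalizes_network_matrix
    (n : ℕ) (d : Fin (n + 1) → ℝ) (hd : ∀ i, 0 < d i)
    (M : Matrix (Fin (n + 1)) (Fin (n + 1)) ℝ) (hM : M = Matrix.diagonal d)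
    (Lb : Matrix (Fin (n + 1)) (Fin (n + 1)) ℝ)
    (hrow : Lb.mulVec (fun _ => 1) = 0)
    (hcol : Matrix.vecMul (fun _ => 1) Lb = 0)
    (S : Matrix (Fin (n + 1)) (Fin n) ℝ)
    (hS : ∀ i j, S i j =
      if (i : ℕ) = (j : ℕ) then -1 else if (i : ℕ) = n then 1 else 0)
    (Sp : Matrix (Fin n) (Fin (n + 1)) ℝ)
    (hSp : Sp = (Sᵀ * M⁻¹ * S)⁻¹ * Sᵀ * M⁻¹)
    (σ : ℝ) (hσ : σ = dotProduct (fun _ => 1) (M.mulVec (fun _ => 1)))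
    (U : Matrix (Fin (n + 1)) (Fin 1 ⊕ Fin n) ℝ)
    (hU : U = Matrix.fromCols (Matrix.of fun _ _ => σ⁻¹) (M⁻¹ * S))
    (V : Matrix (Fin 1 ⊕ Fin n) (Fin (n + 1)) ℝ)
    (hV : V = Matrix.fromRows (Matrix.of fun _ j => Matrix.vecMul (fun _ => 1) M j) (Sp * M)) :
    V * (M⁻¹ * Lb) * U =
      Matrix.fromBlocks (0 : Matrix (Fin 1) (Fin 1) ℝ) 0 0 (Sp * Lb * M⁻¹ * S) := by
  have hdet : M.det ≠ 0 := by
    rw [hM, det_diagonal]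
    exact Finset.prod_ne_zero_iff.mpr fun i _ => (hd i).ne'
  have hMM : M * M⁻¹ = 1 := Matrix.mul_nonsing_inv M (Ne.isUnit hdet)
  -- The top row block of V
  have hR1 : (Matrix.of fun (_ : Fin 1) j => Matrix.vecMul (fun _ => 1) M j)
      = Matrix.replicateRow (Fin 1) (Matrix.vecMul (fun _ => 1) M) := rfl
  have hR1A : Matrix.replicateRow (Fin 1) (Matrix.vecMul (fun _ => 1) M) * (M⁻¹ * Lb) = 0 := by
    rw [← Matrix.replicateRow_vecMul, Matrix.vecMul_vecMul, ← Matrix.mul_assoc, hMM,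
      Matrix.one_mul, hcol]
    ext i j
    simp
  have hR2A : (Sp * M) * (M⁻¹ * Lb) = Sp * Lb := by
    rw [Matrix.mul_assoc, ← Matrix.mul_assoc M, hMM, Matrix.one_mul]
  have hC1 : (Matrix.of fun (_ : Fin (n+1)) (_ : Fin 1) => σ⁻¹)
      = Matrix.replicateCol (Fin 1) (fun _ => σ⁻¹) := rfl
  have hBL : (Sp * Lb : Matrix (Fin n) (Fin (n+1)) ℝ) * (Matrix.replicateCol (Fin 1) (fun _ => σ⁻¹) : Matrix (Fin (n+1)) (Fin 1) ℝ) = (0 : Matrix (Fin n) (Fin 1) ℝ) := by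
    rw [← Matrix.replicateCol_mulVec]
    have : (Sp * Lb).mulVec (fun _ => σ⁻¹) = 0 := by
      have h1 : (fun (_ : Fin (n+1)) => σ⁻¹) = σ⁻¹ • (fun _ => (1 : ℝ)) := by
        funext i; simp
      rw [h1, Matrix.mulVec_smul, ← Matrix.mulVec_mulVec, hrow, Matrix.mulVec_zero,
        smul_zero]
    rw [this]
    ext i j
    simp
  rw [hV, hU, Matrix.fromRows_mul, Matrix.fromRows_mul_fromCols, hR1, hR1A, hR2A,
    hC1, hBL]
  simp [Matrix.mul_assoc]
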